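/- Let μ be the measure on [0,1] given by μ = (1 - min{α,β})·δ₀ + max{α+β-1, 0}·δ₁ + f(x)dx, where f(x) = √((r₊-x)(x-r₋)) / (2π x(1-x)) on [r₋, r₊] and 0 elsewhere, with r_± = α+β-2αβ ± 2√(αβ(1-α)(1-β)) and α,β ∈ (0,1). Then μ is a probability measure, i.e. its total mass is 1. -/

import Mathlib

open MeasureTheory

/-- `r₋ = α+β-2αβ - 2√(αβ(1-α)(1-β))`. -/
noncomputable def rminus (α β : ℝ) : ℝ :=
  α + β - 2 * α * β - 2 * Real.sqrt (α * β * (1 - α) * (1 - β))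

/-- `r₊ = α+β-2αβ + 2√(αβ(1-α)(1-β))`. -/
noncomputable def rplus (α β : ℝ) : ℝ :=
  α + β - 2 * α * β + 2 * Real.sqrt (α * β * (1 - α) * (1 - β))

/-- Density of the absolutely continuous part of the free Jacobi measure:
`√((r₊-x)(x-r₋)) / (2πx(1-x))` on `[r₋, r₊]`, and `0` elsewhere. -/
noncomputable def jacobiDensity (α β : ℝ) (x : ℝ) : ℝ :=
  Set.indicator (Set.Icc (rminus α β) (rplus α β))
    (fun y => Real.sqrt ((rplus α β - y) * (y - rminus α β)) / (2 * Real.pi * y * (1 - y))) x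

/-- The free Jacobi measure
`μ = (1 - min{α,β}) δ₀ + max{α+β-1,0} δ₁ + jacobiDensity(x) dx`. -/
noncomputable def freeJacobi (α β : ℝ) : Measure ℝ :=
  ENNReal.ofReal (1 - min α β) • Measure.dirac 0 +
  ENNReal.ofReal (max (α + β - 1) 0) • Measure.dirac 1 +
  volume.withDensity (fun x => ENNReal.ofReal (jacobiDensity α β x))

section AuxProofs
open Real

lemma helperAlg (m c sh ch d : ℝ) (hch : ch ≠ 0) (hc : c ≠ 0) (hd : d ≠ 0)
    (hd2 : d^2 = m^2 - c^2) (hpy : sh^2 + ch^2 = 1) (hq : m + c*(2*sh*ch) ≠ 0) :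
    m/c^2 + (-(2*sh*ch))/c - (2*d/c^2) * (1/(1+((m*(sh/ch)+c)/d)^2) * ((m * (1/ch^2 * 2⁻¹))/d))
      = (ch^2-sh^2)^2/(m + c*(2*sh*ch)) := by
  have h1 : 1+((m*(sh/ch)+c)/d)^2 = (d^2*ch^2 + (m*sh+c*ch)^2)/(d^2*ch^2) := by
    field_simp
  have h2 : d^2*ch^2 + (m*sh+c*ch)^2 = m * (m + c*(2*sh*ch)) := by
    rw [hd2]; nlinarith [hpy]
  rw [h1, h2]
  have hm : m ≠ 0 := by
    intro h
    have h' : d^2 + c^2 = m^2 := by rw [hd2]; ring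
    rw [h] at h'
    have : (0:ℝ) < c^2 := by positivity
    nlinarith [sq_nonneg d]
  have key' : (ch^2-sh^2)^2 = 1 - 4*sh^2*ch^2 := by linear_combination (sh^2+ch^2+1)*hpy
  rw [key']
  have h3 : (2*d/c^2) * (1/((m * (m + c*(2*sh*ch)))/(d^2*ch^2)) * ((m * (1/ch^2 * 2⁻¹))/d))
      = d^2/(c^2*(m + c*(2*sh*ch))) := by
    rw [one_div_div]
    field_simp
  rw [h3, hd2]
  rw [div_add_div _ _ (pow_ne_zero 2 hc) hc, div_sub_div _ _ (mul_ne_zero (pow_ne_zero 2 hc) hc)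
    (mul_ne_zero (pow_ne_zero 2 hc) hq), div_eq_div_iff (mul_ne_zero (mul_ne_zero (pow_ne_zero 2 hc) hc)
    (mul_ne_zero (pow_ne_zero 2 hc) hq)) hq]
  ring

lemma keyI_lt (m c : ℝ) (hc : 0 < c) (hcm : c < m) :
    ∫ θ in (-(π/2))..(π/2), cos θ^2 / (m + c * sin θ) = π * (m - Real.sqrt (m^2-c^2)) / c^2 := by
  have hD : 0 < m^2 - c^2 := by nlinarith
  set d := Real.sqrt (m^2-c^2) with hdd
  have hd : 0 < d := Real.sqrt_pos.mpr hD
  have hd2 : d^2 = m^2 - c^2 := Real.sq_sqrt hD.le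
  set H : ℝ → ℝ := fun θ => (m/c^2)*θ + cos θ / c - (2*d/c^2) * arctan ((m * tan (θ/2) + c)/d)
    with hH
  have hderiv : ∀ θ ∈ Set.uIcc (-(π/2)) (π/2), HasDerivAt H (cos θ^2 / (m + c*sin θ)) θ := by
    intro θ hθ
    rw [Set.uIcc_of_le (by linarith [pi_pos])] at hθ
    have hch : cos (θ/2) ≠ 0 := by
      apply ne_of_gt
      apply Real.cos_pos_of_mem_Ioo
      constructor
      · nlinarith [hθ.1, pi_pos]
      · nlinarith [hθ.2, pi_pos]
    have h1 : HasDerivAt (fun t : ℝ => tan (t/2)) (1/cos (θ/2)^2 * (1/2)) θ := by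
      have := (Real.hasDerivAt_tan hch).comp θ ((hasDerivAt_id θ).div_const 2)
      simpa [Function.comp_def] using this
    have h2 : HasDerivAt (fun t : ℝ => (m * tan (t/2) + c)/d)
        ((m * (1/cos (θ/2)^2 * (1/2)))/d) θ := ((h1.const_mul m).add_const c).div_const d
    have h3 : HasDerivAt (fun t : ℝ => arctan ((m * tan (t/2) + c)/d))
        (1/(1+((m * tan (θ/2) + c)/d)^2) * ((m * (1/cos (θ/2)^2 * (1/2)))/d)) θ :=
      (Real.hasDerivAt_arctan _).comp θ h2
    have h4 : HasDerivAt H ((m/c^2) * 1 + (-sin θ)/c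
        - (2*d/c^2) * (1/(1+((m * tan (θ/2) + c)/d)^2) * ((m * (1/cos (θ/2)^2 * (1/2)))/d))) θ := by
      exact (((hasDerivAt_id θ).const_mul (m/c^2)).add ((Real.hasDerivAt_cos θ).div_const c)).sub
        (h3.const_mul (2*d/c^2))
    convert h4 using 1
    have hq : m + c * sin θ ≠ 0 := by nlinarith [neg_one_le_sin θ, sin_le_one θ]
    have hsin : sin θ = 2 * sin (θ/2) * cos (θ/2) := by
      rw [← Real.sin_two_mul, show 2*(θ/2) = θ by ring]
    have hcos : cos θ = cos (θ/2)^2 - sin (θ/2)^2 := by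
      rw [← Real.cos_two_mul', show 2*(θ/2) = θ by ring]
    have hq' : m + c * (2 * sin (θ/2) * cos (θ/2)) ≠ 0 := by rw [← hsin]; exact hq
    have hpy : sin (θ/2)^2 + cos (θ/2)^2 = 1 := Real.sin_sq_add_cos_sq _
    rw [hsin, hcos, Real.tan_eq_sin_div_cos]
    linear_combination -(helperAlg m c (sin (θ/2)) (cos (θ/2)) d hch hc.ne' hd.ne' hd2 hpy hq')
  have hint : IntervalIntegrable (fun θ => cos θ^2 / (m + c * sin θ)) MeasureTheory.volume
      (-(π/2)) (π/2) := by
    apply Continuous.intervalIntegrable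
    apply (continuous_cos.pow 2).div (continuous_const.add (continuous_const.mul continuous_sin))
    intro x
    show m + c * sin x ≠ 0
    nlinarith [neg_one_le_sin x, sin_le_one x]
  rw [intervalIntegral.integral_eq_sub_of_hasDerivAt hderiv hint]
  have hmc : (0:ℝ) < m + c := by linarith
  have harc : arctan ((m * 1 + c)/d) - arctan ((m * (-1) + c)/d) = π/2 := by
    have hx : (0:ℝ) < (m+c)/d := div_pos hmc hd
    have hinv : (m * (-1) + c)/d = -(((m+c)/d)⁻¹) := by
      rw [inv_div]
      field_simp
      linear_combination hd2
    rw [hinv, Real.arctan_neg, Real.arctan_inv_of_pos hx, mul_one]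
    ring
  have hH2 : H (π/2) - H (-(π/2)) = (m/c^2)*π - (2*d/c^2)*(π/2) := by
    simp only [hH]
    rw [show ((π:ℝ)/2)/2 = π/4 by ring, show (-(π/2))/2 = -(π/4) by ring,
      Real.tan_neg, Real.tan_pi_div_four, Real.cos_neg, Real.cos_pi_div_two]
    linear_combination -(2*d/c^2) * harc
  rw [hH2]
  ring

lemma keyInt (m c : ℝ) (hc : 0 < c) (hcm : c ≤ m) :
    IntervalIntegrable (fun θ => cos θ^2 / (m + c * sin θ)) MeasureTheory.volume
      (-(π/2)) (π/2) := by
  rcases eq_or_lt_of_le hcm with h | h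
  · subst h
    have hle : -(π/2) ≤ (π/2) := by linarith [pi_pos]
    rw [intervalIntegrable_iff_integrableOn_Ioc_of_le hle]
    apply MeasureTheory.IntegrableOn.congr_fun (f := fun θ => (1 - sin θ)/c)
    · exact ((continuous_const.sub continuous_sin).div_const c).integrableOn_Ioc
    · intro θ hθ
      have hm1 : (-1:ℝ) < sin θ := by
        have := Real.strictMonoOn_sin (Set.mem_Icc.mpr ⟨le_refl _, by linarith [pi_pos]⟩)
          (Set.mem_Icc.mpr ⟨hθ.1.le, hθ.2⟩) hθ.1
        simpa using this
      have hcs : cos θ^2 = (1 - sin θ) * (1 + sin θ) := by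
        linear_combination Real.sin_sq_add_cos_sq θ
      have h1s : (1:ℝ) + sin θ ≠ 0 := by linarith
      show (1 - sin θ)/c = cos θ^2 / (c + c * sin θ)
      rw [hcs, show c + c * sin θ = c * (1 + sin θ) by ring]
      field_simp
    · exact measurableSet_Ioc
  · apply Continuous.intervalIntegrable
    apply (continuous_cos.pow 2).div (continuous_const.add (continuous_const.mul continuous_sin))
    intro x
    show m + c * sin x ≠ 0
    nlinarith [neg_one_le_sin x, sin_le_one x]

lemma keyI (m c : ℝ) (hc : 0 < c) (hcm : c ≤ m) :
    ∫ θ in (-(π/2))..(π/2), cos θ^2 / (m + c * sin θ)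
      = π * (m - Real.sqrt (m^2-c^2)) / c^2 := by
  rcases eq_or_lt_of_le hcm with h | h
  · subst h
    have hle : -(π/2) ≤ (π/2) := by linarith [pi_pos]
    have hstep : ∫ θ in (-(π/2))..(π/2), cos θ^2 / (c + c * sin θ)
        = ∫ θ in (-(π/2))..(π/2), (1 - sin θ)/c := by
      rw [intervalIntegral.integral_of_le hle, intervalIntegral.integral_of_le hle]
      apply MeasureTheory.setIntegral_congr_fun measurableSet_Ioc
      intro θ hθ
      have hm1 : (-1:ℝ) < sin θ := by
        have := Real.strictMonoOn_sin (Set.mem_Icc.mpr ⟨le_refl _, by linarith [pi_pos]⟩)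
          (Set.mem_Icc.mpr ⟨hθ.1.le, hθ.2⟩) hθ.1
        simpa using this
      have hcs : cos θ^2 = (1 - sin θ) * (1 + sin θ) := by
        linear_combination Real.sin_sq_add_cos_sq θ
      have h1s : (1:ℝ) + sin θ ≠ 0 := by linarith
      simp only
      rw [hcs, show c + c * sin θ = c * (1 + sin θ) by ring]
      field_simp
    rw [hstep, intervalIntegral.integral_div]
    rw [intervalIntegral.integral_sub intervalIntegrable_const
      (continuous_sin.intervalIntegrable _ _)]
    rw [integral_sin]
    simp only [intervalIntegral.integral_const, smul_eq_mul, mul_one, Real.cos_neg,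
      Real.cos_pi_div_two, sub_self, Real.sqrt_zero, sub_zero]
    field_simp
    ring
  · exact keyI_lt m c hc h

lemma keyI_neg (m c : ℝ) (hc : 0 < c) (hcm : c ≤ m) :
    ∫ θ in (-(π/2))..(π/2), cos θ^2 / (m - c * sin θ)
      = π * (m - Real.sqrt (m^2-c^2)) / c^2 := by
  have h := intervalIntegral.integral_comp_neg (a := -(π/2)) (b := (π/2))
    (fun θ => cos θ^2 / (m + c * sin θ))
  simp only [Real.cos_neg, Real.sin_neg, neg_neg, mul_neg, ← sub_eq_add_neg] at h
  rw [h]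
  exact keyI m c hc hcm

lemma keyInt_neg (m c : ℝ) (hc : 0 < c) (hcm : c ≤ m) :
    IntervalIntegrable (fun θ => cos θ^2 / (m - c * sin θ)) MeasureTheory.volume
      (-(π/2)) (π/2) := by
  have h := ((IntervalIntegrable.iff_comp_neg (by simp)).mp (keyInt m c hc hcm)).symm
  simp only [Real.cos_neg, Real.sin_neg, neg_neg, mul_neg, ← sub_eq_add_neg] at h
  exact h

lemma mainCombined (m c : ℝ) (hc : 0 < c) (hcm : c ≤ m) (hcm' : c ≤ 1 - m) :
    (MeasureTheory.Integrable (fun x => Set.indicator (Set.Icc (m - c) (m + c))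
        (fun y => Real.sqrt ((m + c - y) * (y - (m - c))) / (2 * π * y * (1 - y))) x))
    ∧ (∫ x, Set.indicator (Set.Icc (m - c) (m + c))
        (fun y => Real.sqrt ((m + c - y) * (y - (m - c))) / (2 * π * y * (1 - y))) x)
      = (1 - Real.sqrt (m^2 - c^2) - Real.sqrt ((1-m)^2 - c^2)) / 2 := by
  have hle : -(π/2) ≤ (π/2) := by linarith [pi_pos]
  set s : Set ℝ := Set.Ioo (-(π/2)) (π/2) with hs
  set φ : ℝ → ℝ := fun θ => m + c * sin θ with hφ
  set f : ℝ → ℝ := fun y => Real.sqrt ((m + c - y) * (y - (m - c))) / (2 * π * y * (1 - y))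
    with hf
  have hsinmem : ∀ θ ∈ s, -1 < sin θ ∧ sin θ < 1 := by
    intro θ hθ
    constructor
    · have := Real.strictMonoOn_sin (Set.mem_Icc.mpr ⟨le_refl _, by linarith [pi_pos]⟩)
        (Set.mem_Icc.mpr ⟨hθ.1.le, hθ.2.le⟩) hθ.1
      simpa using this
    · have := Real.strictMonoOn_sin (Set.mem_Icc.mpr ⟨hθ.1.le, hθ.2.le⟩)
        (Set.mem_Icc.mpr ⟨by linarith [pi_pos], le_refl _⟩) hθ.2
      simpa using this
  have hder : ∀ θ ∈ s, HasDerivWithinAt φ (c * cos θ) s θ := fun θ _ =>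
    (((Real.hasDerivAt_sin θ).const_mul c).const_add m).hasDerivWithinAt
  have hinj : Set.InjOn φ s := by
    intro x hx y hy hxy
    have hsin : sin x = sin y := by
      have : c * sin x = c * sin y := by
        simpa [hφ] using hxy
      exact mul_left_cancel₀ hc.ne' this
    exact Real.injOn_sin (Set.Ioo_subset_Icc_self hx) (Set.Ioo_subset_Icc_self hy) hsin
  have himg : φ '' s = Set.Ioo (m - c) (m + c) := by
    ext x
    simp only [Set.mem_image, Set.mem_Ioo]
    constructor
    · rintro ⟨θ, hθ, rfl⟩
      obtain ⟨h1, h2⟩ := hsinmem θ hθ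
      constructor
      · simp only [hφ]; nlinarith
      · simp only [hφ]; nlinarith
    · rintro ⟨h1, h2⟩
      have hu1 : -1 < (x - m) / c := by rw [lt_div_iff₀ hc]; linarith
      have hu2 : (x - m) / c < 1 := by rw [div_lt_one hc]; linarith
      refine ⟨arcsin ((x - m) / c), ⟨?_, ?_⟩, ?_⟩
      · exact Real.neg_pi_div_two_lt_arcsin.mpr hu1
      · exact Real.arcsin_lt_pi_div_two.mpr hu2
      · simp only [hφ]
        rw [Real.sin_arcsin hu1.le hu2.le]
        field_simp
        ring
  have hptwise : ∀ θ ∈ s, |c * cos θ| • f (φ θ)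
      = c^2/(2*π) * (cos θ^2 / (m + c * sin θ) + cos θ^2 / ((1 - m) - c * sin θ)) := by
    intro θ hθ
    obtain ⟨h1, h2⟩ := hsinmem θ hθ
    have hcos : 0 < cos θ := Real.cos_pos_of_mem_Ioo hθ
    have hx0 : 0 < m + c * sin θ := by nlinarith
    have hx1 : m + c * sin θ < 1 := by nlinarith
    simp only [hf, hφ]
    have hsq : (m + c - (m + c * sin θ)) * ((m + c * sin θ) - (m - c)) = (c * cos θ)^2 := by
      linear_combination -c^2 * (Real.sin_sq_add_cos_sq θ)
    rw [hsq, Real.sqrt_sq (by positivity)]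
    rw [abs_of_pos (by positivity), smul_eq_mul]
    have hne1 : (1:ℝ) - (m + c * sin θ) ≠ 0 := by linarith
    have hne1' : (1 - m) - c * sin θ ≠ 0 := by intro h; apply hne1; linarith
    field_simp
    ring
  have hiF : IntervalIntegrable (fun θ => c^2/(2*π) * (cos θ^2 / (m + c * sin θ)
      + cos θ^2 / ((1 - m) - c * sin θ))) MeasureTheory.volume (-(π/2)) (π/2) :=
    ((keyInt m c hc hcm).add (keyInt_neg (1-m) c hc hcm')).const_mul _
  have hcalc1 : ∫ θ in s, c^2/(2*π) * (cos θ^2 / (m + c * sin θ)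
      + cos θ^2 / ((1 - m) - c * sin θ))
      = (1 - Real.sqrt (m^2 - c^2) - Real.sqrt ((1-m)^2 - c^2)) / 2 := by
    rw [hs, ← MeasureTheory.integral_Ioc_eq_integral_Ioo,
      ← intervalIntegral.integral_of_le hle]
    rw [intervalIntegral.integral_const_mul,
      intervalIntegral.integral_add (keyInt m c hc hcm) (keyInt_neg (1-m) c hc hcm'),
      keyI m c hc hcm, keyI_neg (1-m) c hc hcm']
    have hπ : π ≠ 0 := pi_ne_zero
    field_simp
    ring
  constructor
  · rw [MeasureTheory.integrable_indicator_iff measurableSet_Icc,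
      integrableOn_Icc_iff_integrableOn_Ioo, ← himg,
      MeasureTheory.integrableOn_image_iff_integrableOn_abs_deriv_smul measurableSet_Ioo hder hinj]
    apply MeasureTheory.IntegrableOn.congr_fun _ (fun θ hθ => (hptwise θ hθ).symm) measurableSet_Ioo
    exact (hiF.1).mono_set Set.Ioo_subset_Ioc_self
  · rw [MeasureTheory.integral_indicator measurableSet_Icc,
      MeasureTheory.integral_Icc_eq_integral_Ioo, ← himg,
      MeasureTheory.integral_image_eq_integral_abs_deriv_smul measurableSet_Ioo hder hinj]
    rw [MeasureTheory.setIntegral_congr_fun measurableSet_Ioo hptwise]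
    exact hcalc1

end AuxProofs

/-- For `α, β ∈ (0,1)`, the free Jacobi measure is a probability measure. -/
theorem stmt18 (α β : ℝ) (hα : α ∈ Set.Ioo (0:ℝ) 1) (hβ : β ∈ Set.Ioo (0:ℝ) 1) :
    IsProbabilityMeasure (freeJacobi α β) := by
  obtain ⟨hα0, hα1⟩ := hα
  obtain ⟨hβ0, hβ1⟩ := hβ
  have h1a : (0:ℝ) < 1 - α := by linarith
  have h1b : (0:ℝ) < 1 - β := by linarith
  have hPpos : 0 < α * β * (1 - α) * (1 - β) := by positivity
  set c := 2 * Real.sqrt (α * β * (1 - α) * (1 - β)) with hcdef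
  set m := α + β - 2*α*β with hmdef
  have hsq : Real.sqrt (α * β * (1 - α) * (1 - β)) ^ 2 = α * β * (1 - α) * (1 - β) :=
    Real.sq_sqrt hPpos.le
  have hcpos : 0 < c := by
    have := Real.sqrt_pos.mpr hPpos
    rw [hcdef]; linarith
  have hc2 : c^2 = 4*(α * β * (1 - α) * (1 - β)) := by
    rw [hcdef, mul_pow, hsq]; ring
  have hm2 : m^2 - c^2 = (α - β)^2 := by rw [hc2, hmdef]; ring
  have hm2' : (1-m)^2 - c^2 = (α + β - 1)^2 := by rw [hc2, hmdef]; ring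
  have hmpos : 0 < m := by rw [hmdef]; nlinarith
  have h1mpos : 0 < 1 - m := by rw [hmdef]; nlinarith
  have hcm : c ≤ m := by nlinarith [sq_nonneg (α - β)]
  have hcm' : c ≤ 1 - m := by nlinarith [sq_nonneg (α + β - 1)]
  have hrm : rminus α β = m - c := by rw [rminus, hmdef, hcdef]
  have hrp : rplus α β = m + c := by rw [rplus, hmdef, hcdef]
  have hjd : jacobiDensity α β = fun x => Set.indicator (Set.Icc (m - c) (m + c))
      (fun y => Real.sqrt ((m + c - y) * (y - (m - c))) / (2 * Real.pi * y * (1 - y))) x := by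
    funext x
    rw [jacobiDensity, hrm, hrp]
  obtain ⟨hInt, hIval⟩ := mainCombined m c hcpos hcm hcm'
  rw [← hjd] at hInt hIval
  rw [hm2, hm2', Real.sqrt_sq_eq_abs, Real.sqrt_sq_eq_abs] at hIval
  have hnn : ∀ x, 0 ≤ jacobiDensity α β x := by
    intro x
    apply Set.indicator_nonneg
    intro y hy
    rw [hrm, hrp] at hy
    have hy0 : 0 ≤ y := by have := hy.1; linarith
    have hy1 : y ≤ 1 := by have := hy.2; linarith
    apply div_nonneg (Real.sqrt_nonneg _)
    exact mul_nonneg (mul_nonneg (by positivity) hy0) (by linarith)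
  have hlint : ∫⁻ x, ENNReal.ofReal (jacobiDensity α β x)
      = ENNReal.ofReal ((1 - |α - β| - |α + β - 1|)/2) := by
    rw [← MeasureTheory.ofReal_integral_eq_lintegral_ofReal hInt (ae_of_all _ hnn), hIval]
  have habs : |α - β| + |α + β - 1| ≤ 1 := by
    rcases le_total α β with h | h <;> rcases le_total (α+β) 1 with h' | h'
    · rw [abs_of_nonpos (by linarith), abs_of_nonpos (by linarith)]; linarith
    · rw [abs_of_nonpos (by linarith), abs_of_nonneg (by linarith)]; linarith
    · rw [abs_of_nonneg (by linarith), abs_of_nonpos (by linarith)]; linarith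
    · rw [abs_of_nonneg (by linarith), abs_of_nonneg (by linarith)]; linarith
  have hminn : 0 ≤ 1 - min α β := by
    rcases le_total α β with h | h
    · rw [min_eq_left h]; linarith
    · rw [min_eq_right h]; linarith
  have hmaxn : (0:ℝ) ≤ max (α + β - 1) 0 := le_max_right _ _
  have hsum : (1 - min α β) + max (α + β - 1) 0 + (1 - |α - β| - |α + β - 1|)/2 = 1 := by
    rcases le_total α β with h | h <;> rcases le_total (α+β) 1 with h' | h'
    · rw [min_eq_left h, max_eq_right (by linarith), abs_of_nonpos (by linarith),
        abs_of_nonpos (by linarith)]; ring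
    · rw [min_eq_left h, max_eq_left (by linarith), abs_of_nonpos (by linarith),
        abs_of_nonneg (by linarith)]; ring
    · rw [min_eq_right h, max_eq_right (by linarith), abs_of_nonneg (by linarith),
        abs_of_nonpos (by linarith)]; ring
    · rw [min_eq_right h, max_eq_left (by linarith), abs_of_nonneg (by linarith),
        abs_of_nonneg (by linarith)]; ring
  constructor
  rw [freeJacobi]
  rw [Measure.add_apply, Measure.add_apply, Measure.smul_apply, Measure.smul_apply,
    MeasureTheory.withDensity_apply _ MeasurableSet.univ, Measure.restrict_univ]
  rw [hlint]
  have hd0 : (Measure.dirac (0:ℝ)) Set.univ = 1 := measure_univ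
  have hd1 : (Measure.dirac (1:ℝ)) Set.univ = 1 := measure_univ
  rw [hd0, hd1, smul_eq_mul, smul_eq_mul, mul_one, mul_one]
  rw [← ENNReal.ofReal_add hminn hmaxn,
    ← ENNReal.ofReal_add (by linarith) (by linarith), hsum, ENNReal.ofReal_one]
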